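/- Let g be a gflow of an extended open graph and let g_σ (σ ∈ {X,Y,Z}) be the recursively defined maps from Theorem 1's proof. For every u ∈ Oᶜ: g_σ(u) ∩ {u} = g(u) ∩ {u} and Odd(g_σ(u)) ∩ {u} = Odd(g(u)) ∩ {u}. -/

import Mathlib

open scoped symmDiff

inductive Pauli | X | Y | Z
deriving DecidableEq

inductive MPlane | XY | XZ | YZ
deriving DecidableEq

/-- The set of Pauli operators defining a measurement plane. -/
def MPlane.paulis : MPlane → Finset Pauli
  | .XY => {.X, .Y}
  | .XZ => {.X, .Z}
  | .YZ => {.Y, .Z}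

variable {V : Type} [Fintype V] [DecidableEq V]

/-- Odd neighbourhood: vertices with an odd number of neighbours in `A`. -/
def oddNbhd (G : SimpleGraph V) [DecidableRel G.Adj] (A : Finset V) : Finset V :=
  Finset.univ.filter fun w => Odd (A.filter (G.Adj w)).card

/-- `f` is extensive w.r.t. the strict order `r`. -/
def IsExtensive (O : Finset V) (r : V → V → Prop) (f : V → Finset V) : Prop :=
  ∀ u ∉ O, ∀ v ∈ f u, v ≠ u → r u v

/-- gflow of an extended open graph `(G, I, O, lam)`. -/
def IsGflow (G : SimpleGraph V) [DecidableRel G.Adj]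
    (I O : Finset V) (lam : V → MPlane) (g : V → Finset V) : Prop :=
  (∀ u ∉ O, g u ⊆ Iᶜ) ∧
  (∃ r : V → V → Prop, IsStrictOrder V r ∧
    IsExtensive O r (fun u => g u ∪ oddNbhd G (g u))) ∧
  ∀ u ∉ O,
    (lam u = .XY → u ∈ oddNbhd G (g u) ∧ u ∉ g u) ∧
    (lam u = .XZ → u ∈ g u ∧ u ∈ oddNbhd G (g u)) ∧
    (lam u = .YZ → u ∈ g u ∧ u ∉ oddNbhd G (g u))

/-- σ-normal forms for gflows. -/
def IsNF (σ : Pauli) (G : SimpleGraph V) [DecidableRel G.Adj]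
    (O : Finset V) (g : V → Finset V) : Prop :=
  match σ with
  | .X => ∀ u ∉ O, oddNbhd G (g u) ⊆ insert u O
  | .Y => ∀ u ∉ O, (g u ∆ oddNbhd G (g u)) ⊆ insert u O
  | .Z => ∀ u ∉ O, g u ⊆ insert u O
instance : Std.Commutative (α := Finset V) (· ∆ ·) := ⟨symmDiff_comm⟩
instance : Std.Associative (α := Finset V) (· ∆ ·) := ⟨symmDiff_assoc⟩

/-- Iterated symmetric difference `△_{v ∈ s} f v`. -/
def symmDiffFold (s : Finset V) (f : V → Finset V) : Finset V :=
  s.fold (· ∆ ·) ∅ f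


section Aux
set_option linter.unusedSectionVars false

lemma odd_card_symmDiff (A B : Finset V) :
    Odd (A ∆ B).card ↔ Xor' (Odd A.card) (Odd B.card) := by
  have h1 : (A ∆ B).card = (A \ B).card + (B \ A).card := by
    rw [symmDiff_def]
    exact Finset.card_union_of_disjoint (Finset.sdiff_disjoint.mono_right Finset.sdiff_subset)
  have h2 : A.card = (A \ B).card + (A ∩ B).card := by
    rw [Finset.card_sdiff_add_card_inter]
  have h3 : B.card = (B \ A).card + (A ∩ B).card := by
    rw [Finset.inter_comm, Finset.card_sdiff_add_card_inter]
  rw [h1, h2, h3]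
  simp [Nat.odd_iff, Xor', xor_def]; omega

lemma oddNbhd_symmDiff' (G : SimpleGraph V) [DecidableRel G.Adj] (A B : Finset V) :
    oddNbhd G (A ∆ B) = oddNbhd G A ∆ oddNbhd G B := by
  ext w
  have hf : (A ∆ B).filter (G.Adj w) = A.filter (G.Adj w) ∆ B.filter (G.Adj w) := by
    ext x; simp [Finset.mem_symmDiff, Finset.mem_filter]; tauto
  simp only [oddNbhd, Finset.mem_symmDiff, Finset.mem_filter, Finset.mem_univ, true_and, hf,
    odd_card_symmDiff, Xor', xor_def]

lemma oddNbhd_empty' (G : SimpleGraph V) [DecidableRel G.Adj] :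
    oddNbhd G (∅ : Finset V) = ∅ := by
  simp [oddNbhd]

lemma mem_symmDiffFold' {s : Finset V} {f : V → Finset V} {x : V}
    (h : x ∈ symmDiffFold s f) : ∃ w ∈ s, x ∈ f w := by
  induction s using Finset.induction_on with
  | empty => simp [symmDiffFold] at h
  | insert _ _ ha ih =>
    rw [symmDiffFold, Finset.fold_insert ha] at h
    rcases Finset.mem_symmDiff.mp h with ⟨h1, _⟩ | ⟨h1, _⟩
    · exact ⟨_, Finset.mem_insert_self _ _, h1⟩
    · obtain ⟨w, hw, hx⟩ := ih h1
      exact ⟨w, Finset.mem_insert_of_mem hw, hx⟩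

lemma mem_oddNbhd_symmDiffFold' (G : SimpleGraph V) [DecidableRel G.Adj]
    {s : Finset V} {f : V → Finset V} {x : V}
    (h : x ∈ oddNbhd G (symmDiffFold s f)) : ∃ w ∈ s, x ∈ oddNbhd G (f w) := by
  induction s using Finset.induction_on with
  | empty => simp [symmDiffFold, oddNbhd_empty'] at h
  | insert _ _ ha ih =>
    rw [symmDiffFold, Finset.fold_insert ha, oddNbhd_symmDiff'] at h
    rcases Finset.mem_symmDiff.mp h with ⟨h1, _⟩ | ⟨h1, _⟩
    · exact ⟨_, Finset.mem_insert_self _ _, h1⟩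
    · obtain ⟨w, hw, hx⟩ := ih h1
      exact ⟨w, Finset.mem_insert_of_mem hw, hx⟩

lemma gs_chain (G : SimpleGraph V) [DecidableRel G.Adj] (O : Finset V) (g : V → Finset V)
    (r : V → V → Prop) (hr : IsStrictOrder V r)
    (hext : IsExtensive O r (fun u => g u ∪ oddNbhd G (g u)))
    (S : V → Finset V) (hS : ∀ v, S v ⊆ (g v ∪ oddNbhd G (g v)) \ insert v O)
    (gs : V → Finset V) (hgs : ∀ u ∉ O, gs u = g u ∆ symmDiffFold (S u) gs) :
    ∀ v ∉ O, ∀ x, x ∈ gs v ∪ oddNbhd G (gs v) → x = v ∨ r v x := by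
  haveI irr := hr.toIrrefl
  haveI tr := hr.toIsTrans
  have hwf : WellFounded (flip r) := by
    haveI : Std.Irrefl (flip r) := ⟨fun a h => irr.irrefl a h⟩
    haveI : IsTrans V (flip r) := ⟨fun a b c h1 h2 => tr.trans _ _ _ h2 h1⟩
    exact Finite.wellFounded_of_trans_of_irrefl _
  intro v
  induction v using hwf.induction with
  | _ v IH =>
    intro hv x hx
    have hSv : ∀ w ∈ S v, w ∉ O ∧ w ≠ v ∧ r v w := by
      intro w hw
      have := hS v hw
      rw [Finset.mem_sdiff, Finset.mem_insert] at this
      obtain ⟨hmem, hni⟩ := this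
      have hne : w ≠ v := fun h => hni (Or.inl h)
      have hO : w ∉ O := fun h => hni (Or.inr h)
      exact ⟨hO, hne, hext v hv w hmem hne⟩
    rw [hgs v hv] at hx
    have step : ∀ w ∈ S v, ∀ y, y ∈ gs w ∪ oddNbhd G (gs w) → r v y := by
      intro w hw y hy
      obtain ⟨hwO, _, hrvw⟩ := hSv w hw
      rcases IH w hrvw hwO y hy with rfl | h
      · exact hrvw
      · exact tr.trans _ _ _ hrvw h
    rcases Finset.mem_union.mp hx with h | h
    · rcases Finset.mem_symmDiff.mp h with ⟨h1, _⟩ | ⟨h1, _⟩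
      · by_cases hxe : x = v
        · exact Or.inl hxe
        · exact Or.inr (hext v hv x (Finset.mem_union_left _ h1) hxe)
      · obtain ⟨w, hw, hx'⟩ := mem_symmDiffFold' h1
        exact Or.inr (step w hw x (Finset.mem_union_left _ hx'))
    · rw [oddNbhd_symmDiff'] at h
      rcases Finset.mem_symmDiff.mp h with ⟨h1, _⟩ | ⟨h1, _⟩
      · by_cases hxe : x = v
        · exact Or.inl hxe
        · exact Or.inr (hext v hv x (Finset.mem_union_right _ h1) hxe)
      · obtain ⟨w, hw, hx'⟩ := mem_oddNbhd_symmDiffFold' G h1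
        exact Or.inr (step w hw x (Finset.mem_union_right _ hx'))

end Aux

/-- The recursively defined maps `g_σ` agree with `g` on membership of `u` in `g_σ(u)`
and in `Odd(g_σ(u))`. -/
theorem gsigma_fixes_u (G : SimpleGraph V) [DecidableRel G.Adj]
    (I O : Finset V) (lam : V → MPlane) (g : V → Finset V)
    (r : V → V → Prop) (hr : IsStrictOrder V r)
    (hext : IsExtensive O r (fun u => g u ∪ oddNbhd G (g u)))
    (hg : IsGflow G I O lam g)
    (gX gY gZ : V → Finset V)
    (hgX : ∀ u ∉ O, gX u = g u ∆ symmDiffFold ((oddNbhd G (g u)) \ insert u O) gX)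
    (hgY : ∀ u ∉ O, gY u = g u ∆ symmDiffFold ((g u ∆ oddNbhd G (g u)) \ insert u O) gY)
    (hgZ : ∀ u ∉ O, gZ u = g u ∆ symmDiffFold ((g u) \ insert u O) gZ) :
    ∀ u ∉ O,
      (gX u ∩ {u} = g u ∩ {u} ∧ oddNbhd G (gX u) ∩ {u} = oddNbhd G (g u) ∩ {u}) ∧
      (gY u ∩ {u} = g u ∩ {u} ∧ oddNbhd G (gY u) ∩ {u} = oddNbhd G (g u) ∩ {u}) ∧
      (gZ u ∩ {u} = g u ∩ {u} ∧ oddNbhd G (gZ u) ∩ {u} = oddNbhd G (g u) ∩ {u}) := by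
  
  haveI irr := hr.toIrrefl
  haveI tr := hr.toIsTrans
  have key : ∀ (S : V → Finset V) (gs : V → Finset V),
      (∀ v, S v ⊆ (g v ∪ oddNbhd G (g v)) \ insert v O) →
      (∀ u ∉ O, gs u = g u ∆ symmDiffFold (S u) gs) →
      ∀ u ∉ O, gs u ∩ {u} = g u ∩ {u} ∧
        oddNbhd G (gs u) ∩ {u} = oddNbhd G (g u) ∩ {u} := by
    intro S gs hS hgs u hu
    have chain := gs_chain G O g r hr hext S hS gs hgs
    set F := symmDiffFold (S u) gs with hF
    have hSu : ∀ w ∈ S u, w ∉ O ∧ r u w := by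
      intro w hw
      have := hS u hw
      rw [Finset.mem_sdiff, Finset.mem_insert] at this
      obtain ⟨hmem, hni⟩ := this
      have hne : w ≠ u := fun h => hni (Or.inl h)
      exact ⟨fun h => hni (Or.inr h), hext u hu w hmem hne⟩
    have hnot : ∀ w ∈ S u, ∀ y, y ∈ gs w ∪ oddNbhd G (gs w) → y ≠ u := by
      intro w hw y hy hyu
      obtain ⟨hwO, hrvw⟩ := hSu w hw
      rcases chain w hwO y hy with rfl | h
      · exact irr.irrefl u (hyu ▸ hrvw)
      · exact irr.irrefl u (hyu ▸ (tr.trans u w y hrvw h))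
    have huF1 : u ∉ F := by
      intro h
      obtain ⟨w, hw, hx⟩ := mem_symmDiffFold' h
      exact hnot w hw u (Finset.mem_union_left _ hx) rfl
    have huF2 : u ∉ oddNbhd G F := by
      intro h
      obtain ⟨w, hw, hx⟩ := mem_oddNbhd_symmDiffFold' G h
      exact hnot w hw u (Finset.mem_union_right _ hx) rfl
    constructor
    · ext x
      simp only [Finset.mem_inter, Finset.mem_singleton, hgs u hu, Finset.mem_symmDiff]
      constructor
      · rintro ⟨h, rfl⟩
        refine ⟨?_, rfl⟩
        rcases h with ⟨h1, _⟩ | ⟨h1, _⟩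
        · exact h1
        · exact absurd h1 huF1
      · rintro ⟨h, rfl⟩
        exact ⟨Or.inl ⟨h, huF1⟩, rfl⟩
    · ext x
      simp only [Finset.mem_inter, Finset.mem_singleton, hgs u hu, oddNbhd_symmDiff',
        Finset.mem_symmDiff]
      constructor
      · rintro ⟨h, rfl⟩
        refine ⟨?_, rfl⟩
        rcases h with ⟨h1, _⟩ | ⟨h1, _⟩
        · exact h1
        · exact absurd h1 huF2
      · rintro ⟨h, rfl⟩
        exact ⟨Or.inl ⟨h, huF2⟩, rfl⟩
  intro u hu
  refine ⟨?_, ?_, ?_⟩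
  · exact key _ gX (fun v => Finset.sdiff_subset_sdiff Finset.subset_union_right le_rfl) hgX u hu
  · exact key _ gY (fun v => Finset.sdiff_subset_sdiff symmDiff_le_sup le_rfl) hgY u hu
  · exact key _ gZ (fun v => Finset.sdiff_subset_sdiff Finset.subset_union_left le_rfl) hgZ u hu
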